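/- Let S be a closed, totally disconnected subset of [0,∞) containing 0. Then there exists a family {A_q}_{q∈ℤ≥0} such that each A_q is a q-nebula and S = ⋂_{q∈ℤ≥0} A_q. -/

import Mathlib

open Set

/-- A closed subset `A` of `[0,∞)` is a `q`-nebula if it is a disjoint union of closed
intervals `I 0, …, I k` with `0 ∈ I 0`, the intervals `I 0, …, I (k-1)` compact of diameter
`< 2^{-q}`, and `I k` an unbounded closed interval contained in `(q, ∞)`. -/
def IsNebula (q : ℕ) (A : Set ℝ) : Prop :=
  IsClosed A ∧ A ⊆ Set.Ici 0 ∧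
  ∃ (k : ℕ) (I : Fin (k + 1) → Set ℝ),
    A = ⋃ i, I i ∧
    (0 : ℝ) ∈ I 0 ∧
    (∀ i : Fin (k + 1), (i : ℕ) < k →
      ∃ a b : ℝ, a ≤ b ∧ I i = Set.Icc a b ∧ b - a < (2 : ℝ) ^ (-(q : ℤ))) ∧
    (∃ a : ℝ, I (Fin.last k) = Set.Ici a ∧ (q : ℝ) < a) ∧
    Pairwise (Function.onFun Disjoint I)


open Classical in
noncomputable def npick (S : Set ℝ) (l u : ℝ) : ℝ :=
  if h : (Set.Ioo l u \ S).Nonempty then h.choose else (l + u) / 2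

lemma npick_mem (S : Set ℝ) (hStd : IsTotallyDisconnected S) {l u : ℝ} (h : l < u) :
    npick S l u ∈ Set.Ioo l u ∧ npick S l u ∉ S := by
  have hne : (Set.Ioo l u \ S).Nonempty := by
    by_contra hc
    rw [Set.not_nonempty_iff_eq_empty, Set.diff_eq_empty] at hc
    have hsub := hStd (Set.Ioo l u) hc isPreconnected_Ioo
    have h1 : l + (u - l)/3 ∈ Set.Ioo l u := by constructor <;> nlinarith
    have h2 : l + 2*(u - l)/3 ∈ Set.Ioo l u := by constructor <;> nlinarith
    have := hsub h1 h2
    nlinarith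
  rw [npick]
  rw [dif_pos hne]
  exact ⟨hne.choose_spec.1, hne.choose_spec.2⟩

structure NSt where
  done : Bool
  c : ℝ
  L : List (ℝ × ℝ)

open Classical in
noncomputable def nstep (S : Set ℝ) (q : ℕ) (st : NSt) : NSt :=
  if st.done then st else
  if _h : (S ∩ Set.Ioc st.c (q+1)).Nonempty then
    ⟨false, npick S (sInf (S ∩ Set.Ioi st.c) + (2:ℝ)^(-(q:ℤ))/8)
                    (sInf (S ∩ Set.Ioi st.c) + (2:ℝ)^(-(q:ℤ))/4),
      st.L ++ [(max ((st.c + sInf (S ∩ Set.Ioi st.c))/2)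
                    (sInf (S ∩ Set.Ioi st.c) - (2:ℝ)^(-(q:ℤ))/4),
                npick S (sInf (S ∩ Set.Ioi st.c) + (2:ℝ)^(-(q:ℤ))/8)
                        (sInf (S ∩ Set.Ioi st.c) + (2:ℝ)^(-(q:ℤ))/4))]⟩
  else if _h2 : (S ∩ Set.Ioi st.c).Nonempty then ⟨true, sInf (S ∩ Set.Ioi st.c), st.L⟩
  else ⟨true, max st.c q + 1, st.L⟩

noncomputable def nstate (S : Set ℝ) (q : ℕ) : ℕ → NSt
  | 0 => ⟨false, npick S ((2:ℝ)^(-(q:ℤ))/8) ((2:ℝ)^(-(q:ℤ))/4),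
          [(0, npick S ((2:ℝ)^(-(q:ℤ))/8) ((2:ℝ)^(-(q:ℤ))/4))]⟩
  | n+1 => nstep S q (nstate S q n)

def NInv (S : Set ℝ) (q : ℕ) (st : NSt) : Prop :=
  (∀ p ∈ st.L, 0 ≤ p.1 ∧ p.1 ≤ p.2 ∧ p.2 - p.1 < (2:ℝ)^(-(q:ℤ)) ∧
      (S ∩ Set.Icc p.1 p.2).Nonempty) ∧
  st.L.Pairwise (fun p p' => p.2 < p'.1) ∧
  (∃ e : ℝ, st.L.head? = some (0, e)) ∧
  (if st.done then
     (∀ p ∈ st.L, p.2 < st.c) ∧ (q:ℝ) < st.c ∧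
     (∀ x ∈ S, st.c ≤ x ∨ ∃ p ∈ st.L, x ∈ Set.Icc p.1 p.2)
   else
     (∀ p ∈ st.L, p.2 ≤ st.c) ∧ st.c ∉ S ∧ 0 < st.c ∧ st.c ≤ (q:ℝ) + 2 ∧
     (∀ x ∈ S, x ≤ st.c → ∃ p ∈ st.L, x ∈ Set.Icc p.1 p.2))

lemma two_zpow_pos (q : ℕ) : (0:ℝ) < (2:ℝ)^(-(q:ℤ)) := by positivity

lemma two_zpow_le_one (q : ℕ) : (2:ℝ)^(-(q:ℤ)) ≤ 1 := by
  apply zpow_le_one_of_nonpos₀ (by norm_num)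
  omega

lemma sInf_facts (S : Set ℝ) (hScl : IsClosed S) {c : ℝ} (hcS : c ∉ S)
    (hne : (S ∩ Set.Ioi c).Nonempty) :
    sInf (S ∩ Set.Ioi c) ∈ S ∧ c < sInf (S ∩ Set.Ioi c) := by
  have hbdd : BddBelow (S ∩ Set.Ioi c) := ⟨c, fun x hx => le_of_lt hx.2⟩
  have h1 : sInf (S ∩ Set.Ioi c) ∈ closure (S ∩ Set.Ioi c) := csInf_mem_closure hne hbdd
  have h2 : closure (S ∩ Set.Ioi c) ⊆ S ∩ Set.Ici c := by
    have h3 : S ∩ Set.Ioi c ⊆ S ∩ Set.Ici c :=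
      Set.inter_subset_inter_right _ Set.Ioi_subset_Ici_self
    calc closure (S ∩ Set.Ioi c) ⊆ closure (S ∩ Set.Ici c) := closure_mono h3
      _ = S ∩ Set.Ici c := (hScl.inter isClosed_Ici).closure_eq
  have h4 := h2 h1
  refine ⟨h4.1, lt_of_le_of_ne h4.2 ?_⟩
  intro h5
  exact hcS (h5 ▸ h4.1)


lemma nstep_inv (S : Set ℝ) (hScl : IsClosed S)
    (hStd : IsTotallyDisconnected S) (q : ℕ) (st : NSt) (hst : NInv S q st) :
    NInv S q (nstep S q st) ∧
    ((nstep S q st).done = false →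
      st.done = false ∧ st.c + (2:ℝ)^(-(q:ℤ))/8 ≤ (nstep S q st).c) := by
  have hε : (0:ℝ) < (2:ℝ)^(-(q:ℤ)) := two_zpow_pos q
  have hε1 : (2:ℝ)^(-(q:ℤ)) ≤ 1 := two_zpow_le_one q
  obtain ⟨hI, hP, hH, hD⟩ := hst
  by_cases hd : st.done
  · rw [nstep, if_pos hd]
    exact ⟨⟨hI, hP, hH, hD⟩, fun h => absurd hd (by simp [h])⟩
  · rw [if_neg hd] at hD
    obtain ⟨hL1, hc1, hc2, hc3, hcov⟩ := hD
    rw [nstep, if_neg hd]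
    by_cases h : (S ∩ Set.Ioc st.c ((q:ℝ)+1)).Nonempty
    · rw [dif_pos h]
      obtain ⟨x0, hx0⟩ := h
      have hne : (S ∩ Set.Ioi st.c).Nonempty := ⟨x0, hx0.1, hx0.2.1⟩
      have hbdd : BddBelow (S ∩ Set.Ioi st.c) := ⟨st.c, fun y hy => le_of_lt hy.2⟩
      obtain ⟨htS, hct⟩ := sInf_facts S hScl hc1 hne
      set t := sInf (S ∩ Set.Ioi st.c) with htdef
      have htq : t ≤ (q:ℝ)+1 := le_trans (csInf_le hbdd ⟨hx0.1, hx0.2.1⟩) hx0.2.2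
      obtain ⟨heIoo, heS⟩ := npick_mem S hStd
        (show t + (2:ℝ)^(-(q:ℤ))/8 < t + (2:ℝ)^(-(q:ℤ))/4 by linarith)
      set e := npick S (t + (2:ℝ)^(-(q:ℤ))/8) (t + (2:ℝ)^(-(q:ℤ))/4) with hedef
      obtain ⟨he1, he2⟩ := heIoo
      set d := max ((st.c + t)/2) (t - (2:ℝ)^(-(q:ℤ))/4) with hddef
      have hd1 : st.c < d := lt_of_lt_of_le (by linarith) (le_max_left _ _)
      have hd2 : d < t := max_lt (by linarith) (by linarith)
      have hd0 : 0 ≤ d := le_trans (by linarith) (le_max_left _ _)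
      have hd3 : t - (2:ℝ)^(-(q:ℤ))/4 ≤ d := le_max_right _ _
      constructor
      · refine ⟨?_, ?_, ?_, ?_⟩
        · intro p hp
          rw [List.mem_append, List.mem_singleton] at hp
          rcases hp with hp | hp
          · exact hI p hp
          · subst hp
            exact ⟨hd0, by linarith, by linarith, ⟨t, htS, hd2.le, by linarith⟩⟩
        · rw [List.pairwise_append]
          refine ⟨hP, List.pairwise_singleton _ _, ?_⟩
          intro p hp p' hp'
          rw [List.mem_singleton] at hp'
          subst hp'
          exact lt_of_le_of_lt (hL1 p hp) hd1
        · obtain ⟨e0, he0⟩ := hH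
          refine ⟨e0, ?_⟩
          cases hL : st.L with
          | nil => rw [hL] at he0; simp at he0
          | cons a tl =>
            rw [hL] at he0
            rw [hL, List.cons_append, List.head?_cons] at *
            simpa using he0
        · rw [if_neg (by simp)]
          refine ⟨?_, heS, by linarith, by linarith, ?_⟩
          · intro p hp
            rw [List.mem_append, List.mem_singleton] at hp
            rcases hp with hp | hp
            · linarith [hL1 p hp]
            · subst hp; exact le_refl _
          · intro x hxS hxe
            by_cases hxc : x ≤ st.c
            · obtain ⟨p, hp1, hp2⟩ := hcov x hxS hxc
              exact ⟨p, List.mem_append_left _ hp1, hp2⟩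
            · have htx : t ≤ x := csInf_le hbdd ⟨hxS, lt_of_not_ge hxc⟩
              exact ⟨(d, e), List.mem_append_right _ (List.mem_singleton.mpr rfl),
                by constructor <;> simp <;> linarith⟩
      · intro _
        refine ⟨by simp [hd], ?_⟩
        show st.c + (2:ℝ)^(-(q:ℤ))/8 ≤ e
        linarith
    · rw [dif_neg h]
      by_cases h2 : (S ∩ Set.Ioi st.c).Nonempty
      · rw [dif_pos h2]
        dsimp only
        have hbdd : BddBelow (S ∩ Set.Ioi st.c) := ⟨st.c, fun y hy => le_of_lt hy.2⟩
        obtain ⟨htS, hct⟩ := sInf_facts S hScl hc1 h2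
        set t := sInf (S ∩ Set.Ioi st.c) with htdef
        have htq : ¬ t ≤ (q:ℝ)+1 := fun hle => h ⟨t, htS, hct, hle⟩
        rw [not_le] at htq
        refine ⟨⟨hI, hP, hH, ?_⟩, fun hf => by simp at hf⟩
        rw [if_pos rfl]
        refine ⟨fun p hp => lt_of_le_of_lt (hL1 p hp) hct, by linarith, ?_⟩
        intro x hxS
        by_cases hxc : x ≤ st.c
        · exact Or.inr (hcov x hxS hxc)
        · exact Or.inl (csInf_le hbdd ⟨hxS, lt_of_not_ge hxc⟩)
      · rw [dif_neg h2]
        refine ⟨⟨hI, hP, hH, ?_⟩, fun hf => by simp at hf⟩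
        rw [if_pos rfl]
        dsimp only
        have hmq : (q:ℝ) ≤ max st.c (q:ℝ) := le_max_right _ _
        have hmc : st.c ≤ max st.c (q:ℝ) := le_max_left _ _
        refine ⟨fun p hp => by linarith [hL1 p hp], by linarith, ?_⟩
        intro x hxS
        by_cases hxc : x ≤ st.c
        · exact Or.inr (hcov x hxS hxc)
        · exact absurd ⟨x, hxS, lt_of_not_ge hxc⟩ h2

lemma ninv (S : Set ℝ) (hSsub : S ⊆ Set.Ici 0) (hScl : IsClosed S)
    (hStd : IsTotallyDisconnected S) (hS0 : (0:ℝ) ∈ S) (q : ℕ) : ∀ n : ℕ,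
    NInv S q (nstate S q n) ∧
    ((nstate S q n).done = false →
      ((n:ℝ)+1) * ((2:ℝ)^(-(q:ℤ))/8) ≤ (nstate S q n).c)    := by
  intro n
  induction n with
  | zero =>
      have hε : (0:ℝ) < (2:ℝ)^(-(q:ℤ)) := two_zpow_pos q
      have hε1 : (2:ℝ)^(-(q:ℤ)) ≤ 1 := two_zpow_le_one q
      obtain ⟨he1, he2⟩ := npick_mem S hStd
        (show (2:ℝ)^(-(q:ℤ))/8 < (2:ℝ)^(-(q:ℤ))/4 by linarith)
      obtain ⟨he3, he4⟩ := he1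
      simp only [nstate]
      constructor
      · refine ⟨?_, List.pairwise_singleton _ _, ⟨_, rfl⟩, ?_⟩
        · intro p hp
          rw [List.mem_singleton] at hp
          subst hp
          refine ⟨le_refl 0, by dsimp only; linarith, by dsimp only; linarith,
            ⟨0, hS0, le_refl 0, by dsimp only; linarith⟩⟩
        · rw [if_neg (by simp)]
          refine ⟨?_, he2, by linarith, by linarith, ?_⟩
          · intro p hp
            rw [List.mem_singleton] at hp
            subst hp
            exact le_refl _
          · intro x hxS hx
            exact ⟨(0, _), List.mem_singleton.mpr rfl, hSsub hxS, hx⟩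
      · intro _
        push_cast
        linarith
  | succ n ih =>
      have hs := nstep_inv S hScl hStd q _ ih.1
      refine ⟨hs.1, ?_⟩
      intro hdf
      obtain ⟨hf0, hstep⟩ := hs.2 hdf
      have hb := ih.2 hf0
      have hstep' : (nstate S q n).c + (2:ℝ)^(-(q:ℤ))/8 ≤ (nstate S q (n+1)).c := hstep
      have hε : (0:ℝ) < (2:ℝ)^(-(q:ℤ)) := two_zpow_pos q
      push_cast
      nlinarith [hb, hstep', hε]


lemma ndone (S : Set ℝ) (hSsub : S ⊆ Set.Ici 0) (hScl : IsClosed S)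
    (hStd : IsTotallyDisconnected S) (hS0 : (0:ℝ) ∈ S) (q : ℕ) :
    (nstate S q ((q+3) * 2^(q+3))).done = true := by
  by_contra hcon
  have hfalse : (nstate S q ((q+3) * 2^(q+3))).done = false := by
    cases h : (nstate S q ((q+3) * 2^(q+3))).done
    · rfl
    · exact absurd h hcon
  have h1 := (ninv S hSsub hScl hStd hS0 q ((q+3) * 2^(q+3))).2 hfalse
  obtain ⟨_, _, _, hD⟩ := (ninv S hSsub hScl hStd hS0 q ((q+3) * 2^(q+3))).1
  rw [if_neg (by simp [hfalse])] at hD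
  have hc3 : (nstate S q ((q+3) * 2^(q+3))).c ≤ (q:ℝ) + 2 := hD.2.2.2.1
  have hε : (0:ℝ) < (2:ℝ)^(-(q:ℤ)) := two_zpow_pos q
  have h8 : ((2:ℝ)^(q+3:ℕ)) * (2:ℝ)^(-(q:ℤ)) = 8 := by
    rw [← zpow_natCast (2:ℝ) (q+3), ← zpow_add₀ (two_ne_zero)]
    norm_num
  have key : ((q:ℝ)+3) ≤ ((((q+3) * 2^(q+3) : ℕ)):ℝ) * ((2:ℝ)^(-(q:ℤ))/8) + (2:ℝ)^(-(q:ℤ))/8 := by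
    have hcast : ((((q+3) * 2^(q+3) : ℕ)):ℝ) = ((q:ℝ)+3) * 2^(q+3:ℕ) := by push_cast; ring
    rw [hcast]
    have hring : ((q:ℝ)+3) * 2^(q+3:ℕ) * ((2:ℝ)^(-(q:ℤ))/8)
        = ((q:ℝ)+3) * ((2^(q+3:ℕ) * (2:ℝ)^(-(q:ℤ)))/8) := by ring
    rw [hring, h8]
    nlinarith [hε]
  have h1' : ((((q + 3) * 2 ^ (q + 3) : ℕ)):ℝ) * ((2:ℝ)^(-(q:ℤ))/8) + (2:ℝ)^(-(q:ℤ))/8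
      ≤ (nstate S q ((q+3) * 2^(q+3))).c := by
    have he : ((((q + 3) * 2 ^ (q + 3):ℕ)):ℝ) * ((2:ℝ)^(-(q:ℤ))/8) + (2:ℝ)^(-(q:ℤ))/8
        = (((((q + 3) * 2 ^ (q + 3):ℕ)):ℝ) + 1) * ((2:ℝ)^(-(q:ℤ))/8) := by ring
    rw [he]
    exact h1
  linarith [hc3, key, h1']

/-- Proposition 2.14: every closed totally disconnected subset `S` of `[0,∞)` containing `0`
is the intersection of a family `{A q}` where each `A q` is a `q`-nebula. -/
theorem eq_iInter_nebulae
    (S : Set ℝ) (hSsub : S ⊆ Set.Ici 0) (hScl : IsClosed S)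
    (hStd : IsTotallyDisconnected S) (hS0 : (0 : ℝ) ∈ S) :
    ∃ A : ℕ → Set ℝ, (∀ q : ℕ, IsNebula q (A q)) ∧ S = ⋂ q, A q := by
  classical
  refine ⟨fun q => (⋃ p ∈ (nstate S q ((q+3) * 2^(q+3))).L, Set.Icc p.1 p.2) ∪
      Set.Ici (nstate S q ((q+3) * 2^(q+3))).c, ?_, ?_⟩
  · intro q
    obtain ⟨hI, hP, hH, hD⟩ := (ninv S hSsub hScl hStd hS0 q ((q+3) * 2^(q+3))).1
    have hdone := ndone S hSsub hScl hStd hS0 q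
    rw [if_pos hdone] at hD
    obtain ⟨hlt, hqc, hcov⟩ := hD
    set st := nstate S q ((q+3) * 2^(q+3)) with hst
    obtain ⟨e0, he0⟩ := hH
    have hne : st.L ≠ [] := by
      intro hnil
      rw [hnil] at he0
      simp at he0
    have hk0 : 0 < st.L.length := List.length_pos_iff.mpr hne
    set I : Fin (st.L.length + 1) → Set ℝ := fun i =>
      if h : (i:ℕ) < st.L.length then Set.Icc (st.L[(i:ℕ)]'h).1 (st.L[(i:ℕ)]'h).2
      else Set.Ici st.c with hIdef
    have hIpos : ∀ (i : Fin (st.L.length + 1)) (h : (i:ℕ) < st.L.length),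
        I i = Set.Icc (st.L[(i:ℕ)]'h).1 (st.L[(i:ℕ)]'h).2 := by
      intro i h
      rw [hIdef]
      exact dif_pos h
    have hIlast : I (Fin.last st.L.length) = Set.Ici st.c := by
      rw [hIdef]
      exact dif_neg (by simp)
    have hAI : ((⋃ p ∈ st.L, Set.Icc p.1 p.2) ∪ Set.Ici st.c) = ⋃ i, I i := by
      ext x
      simp only [Set.mem_union, Set.mem_iUnion]
      constructor
      · rintro (hx | hx)
        · obtain ⟨p, hpL, hxp⟩ := hx
          obtain ⟨n, hn, hnp⟩ := List.mem_iff_getElem.mp hpL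
          refine ⟨⟨n, Nat.lt_succ_of_lt hn⟩, ?_⟩
          rw [hIpos ⟨n, Nat.lt_succ_of_lt hn⟩ hn]
          rw [hnp]
          exact hxp
        · exact ⟨Fin.last _, by rw [hIlast]; exact hx⟩
      · rintro ⟨i, hi⟩
        by_cases h : (i:ℕ) < st.L.length
        · rw [hIpos i h] at hi
          exact Or.inl ⟨st.L[(i:ℕ)]'h, List.getElem_mem h, hi⟩
        · have : i = Fin.last st.L.length := by
            apply Fin.ext
            simp only [Fin.val_last]
            omega
          rw [this, hIlast] at hi
          exact Or.inr hi
    refine ⟨?_, ?_, st.L.length, I, hAI, ?_, ?_, ?_, ?_⟩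
    · apply IsClosed.union
      · apply Set.Finite.isClosed_biUnion (List.finite_toSet _)
        intro p _
        exact isClosed_Icc
      · exact isClosed_Ici
    · intro x hx
      rcases hx with hx | hx
      · simp only [Set.mem_iUnion] at hx
        obtain ⟨p, hpL, hxp⟩ := hx
        have := (hI p hpL).1
        exact le_trans this hxp.1
      · have : (0:ℝ) ≤ (q:ℝ) := Nat.cast_nonneg q
        exact le_trans (le_of_lt (lt_of_le_of_lt this hqc)) hx
    · -- 0 ∈ I 0
      have h0 : ((0 : Fin (st.L.length + 1)) : ℕ) < st.L.length := by
        simpa using hk0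
      rw [hIpos 0 h0]
      have hh : st.L.head? = some (st.L.head hne) := List.head?_eq_head hne
      rw [he0] at hh
      have hhead : st.L[(((0 : Fin (st.L.length + 1))):ℕ)]'h0 = (0, e0) := by
        simp only [Fin.val_zero]
        rw [List.getElem_zero]
        exact (Option.some_inj.mp hh).symm
      rw [hhead]
      have hmem : (0, e0) ∈ st.L := by
        rw [← hhead]
        exact List.getElem_mem h0
      exact ⟨le_refl 0, by simpa using (hI _ hmem).2.1⟩
    · intro i hi
      rw [hIpos i hi]
      have hp := hI _ (List.getElem_mem hi)
      exact ⟨_, _, hp.2.1, rfl, hp.2.2.1⟩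
    · exact ⟨st.c, hIlast, hqc⟩
    · have key : ∀ i j : Fin (st.L.length + 1), (i:ℕ) < (j:ℕ) → Disjoint (I i) (I j) := by
        intro i j hij
        have hi : (i:ℕ) < st.L.length := by omega
        rw [hIpos i hi]
        by_cases hj : (j:ℕ) < st.L.length
        · rw [hIpos j hj]
          have hr := List.pairwise_iff_getElem.mp hP (i:ℕ) (j:ℕ) hi hj hij
          rw [Set.disjoint_left]
          intro x hx1 hx2
          have h1 := hx1.2
          have h2 := hx2.1
          have hr' : (st.L[(i:ℕ)]'hi).2 < (st.L[(j:ℕ)]'hj).1 := hr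
          linarith
        · have : j = Fin.last st.L.length := by
            apply Fin.ext
            simp only [Fin.val_last]
            omega
          rw [this, hIlast]
          have hr := hlt _ (List.getElem_mem hi)
          rw [Set.disjoint_left]
          intro x hx1 hx2
          have := hx1.2
          have h2 : st.c ≤ x := hx2
          linarith
      intro i j hij
      rcases lt_trichotomy (i:ℕ) (j:ℕ) with h | h | h
      · exact key i j h
      · exact absurd (Fin.ext h) hij
      · exact (key j i h).symm
  · apply Set.Subset.antisymm
    · intro x hx
      apply Set.mem_iInter.mpr
      intro q
      obtain ⟨hI, hP, hH, hD⟩ := (ninv S hSsub hScl hStd hS0 q ((q+3) * 2^(q+3))).1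
      have hdone := ndone S hSsub hScl hStd hS0 q
      rw [if_pos hdone] at hD
      obtain ⟨hlt, hqc, hcov⟩ := hD
      rcases hcov x hx with hc | ⟨p, hpL, hxp⟩
      · exact Or.inr hc
      · exact Or.inl (Set.mem_iUnion.mpr ⟨p, Set.mem_iUnion.mpr ⟨hpL, hxp⟩⟩)
    · intro x hx
      by_contra hxS
      have hxS' : x ∈ Sᶜ := hxS
      obtain ⟨δ, hδ, hball⟩ := Metric.isOpen_iff.mp hScl.isOpen_compl x hxS'
      obtain ⟨n, hn⟩ := exists_pow_lt_of_lt_one hδ (show (1:ℝ)/2 < 1 by norm_num)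
      have hn' : (2:ℝ)^(-(n:ℤ)) < δ := by
        have : (2:ℝ)^(-(n:ℤ)) = ((1:ℝ)/2)^n := by
          rw [zpow_neg, zpow_natCast, ← inv_pow, one_div]
        rw [this]
        exact hn
      set q := max n ⌈x⌉₊ with hq
      have hxq : x ≤ (q:ℝ) := le_trans (Nat.le_ceil x) (by exact_mod_cast Nat.cast_le.mpr (le_max_right n ⌈x⌉₊))
      have hqn : (2:ℝ)^(-(q:ℤ)) ≤ (2:ℝ)^(-(n:ℤ)) := by
        apply zpow_le_zpow_right₀ (by norm_num : (1:ℝ) ≤ 2)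
        simp only [neg_le_neg_iff]
        exact_mod_cast le_max_left n ⌈x⌉₊
      have hxAq := Set.mem_iInter.mp hx q
      obtain ⟨hI, hP, hH, hD⟩ := (ninv S hSsub hScl hStd hS0 q ((q+3) * 2^(q+3))).1
      have hdone := ndone S hSsub hScl hStd hS0 q
      rw [if_pos hdone] at hD
      obtain ⟨hlt, hqc, hcov⟩ := hD
      rcases hxAq with hx1 | hx1
      · simp only [Set.mem_iUnion] at hx1
        obtain ⟨p, hpL, hxp⟩ := hx1
        obtain ⟨_, _, hdiam, s, hsS, hs⟩ := hI p hpL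
        have hdist : |s - x| < δ := by
          have h1 : s - x ≤ p.2 - p.1 := by
            have := hs.2
            have := hxp.1
            linarith [hs.1, hs.2, hxp.1, hxp.2]
          have h2 : -(p.2 - p.1) ≤ s - x := by
            linarith [hs.1, hs.2, hxp.1, hxp.2]
          have h3 : |s - x| ≤ p.2 - p.1 := abs_le.mpr ⟨h2, h1⟩
          linarith
        have : s ∈ Metric.ball x δ := by
          rw [Metric.mem_ball, Real.dist_eq]
          exact hdist
        exact hball this hsS
      · have hcx : (nstate S q ((q+3) * 2^(q+3))).c ≤ x := hx1
        linarith
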